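/- Let n > 3 be prime. The number of roots of x^{2^{3n}} + x + 1 = 0 lying in the set S of elements of F_{2^{6n}} of degree 6 over F_{2^n} is 2^{3n} - 2^n. -/

import Mathlib

local notation "K" => AlgebraicClosure (ZMod 2)

open Polynomial

private lemma aux_charK : (2 : K) = 0 := CharTwo.two_eq_zero

/-- Frobenius step. -/
private lemma aux_frob (n : ℕ) (x y : K) : (x + y) ^ (2 ^ n) = x ^ (2 ^ n) + y ^ (2 ^ n) :=
  add_pow_char_pow x y 2 n

private lemma aux_sep (m : ℕ) (hm : 0 < m) :
    (X ^ (2 ^ m) + X + 1 : Polynomial K).Separable := by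
  have h0 : (2:K) = 0 := aux_charK
  have hder : (X ^ (2 ^ m) + X + 1 : Polynomial K).derivative = 1 := by
    have h2 : ((2 ^ m : ℕ) : K) = 0 := by
      rw [Nat.cast_pow, Nat.cast_ofNat, h0, zero_pow hm.ne']
    simp [Polynomial.derivative_X_pow, h2]
  rw [Polynomial.Separable, hder]
  exact isCoprime_one_right

private lemma aux_deg (m : ℕ) (hm : 0 < m) :
    (X ^ (2 ^ m) + X + 1 : Polynomial K).natDegree = 2 ^ m := by
  have h1 : 1 < 2 ^ m := Nat.one_lt_two_pow (by omega)
  compute_degree!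
  · simp [h1.ne]
  · omega

private lemma aux_ne_zero (m : ℕ) (hm : 0 < m) :
    (X ^ (2 ^ m) + X + 1 : Polynomial K) ≠ 0 := by
  intro h
  have h1 := aux_deg m hm
  rw [h, Polynomial.natDegree_zero] at h1
  exact (Nat.two_pow_pos m).ne h1

private lemma aux_card (m : ℕ) (hm : 0 < m) :
    ((X ^ (2 ^ m) + X + 1 : Polynomial K).rootSet K).ncard = 2 ^ m := by
  classical
  rw [Set.ncard_eq_toFinset_card', Set.toFinset_card,
    Polynomial.card_rootSet_eq_natDegree (aux_sep m hm) (IsAlgClosed.splits _),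
    aux_deg m hm]

theorem stmt_6 (n : ℕ) (hn : n.Prime) (hn3 : 3 < n) :
    Nat.card {x : K // x ^ (2 ^ (3 * n)) + x + 1 = 0 ∧
        x ^ (2 ^ (6 * n)) = x ∧ x ^ (2 ^ (2 * n)) ≠ x ∧ x ^ (2 ^ (3 * n)) ≠ x}
      = 2 ^ (3 * n) - 2 ^ n := by
  classical
  have hnpos : 0 < n := hn.pos
  have h0 : (2:K) = 0 := aux_charK
  set f : Polynomial K := X ^ (2 ^ (3 * n)) + X + 1 with hf
  set g : Polynomial K := X ^ (2 ^ n) + X + 1 with hg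
  have hfne : f ≠ 0 := aux_ne_zero (3 * n) (by omega)
  have hgne : g ≠ 0 := aux_ne_zero n hnpos
  -- membership characterizations
  have hmemf : ∀ x : K, x ∈ f.rootSet K ↔ x ^ (2 ^ (3 * n)) + x + 1 = 0 := by
    intro x
    rw [Polynomial.mem_rootSet]
    simp [aux_ne_zero (3 * n) (by omega), hf]
  have hmemg : ∀ x : K, x ∈ g.rootSet K ↔ x ^ (2 ^ n) + x + 1 = 0 := by
    intro x
    rw [Polynomial.mem_rootSet]
    simp [aux_ne_zero n hnpos, hg]
  -- basic Frobenius computations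
  have key1 : ∀ x : K, x ^ (2 ^ n) = x + 1 → x ^ (2 ^ (2 * n)) = x := by
    intro x h
    have e : (2:ℕ) ^ (2 * n) = 2 ^ n * 2 ^ n := by rw [two_mul, pow_add]
    rw [e, pow_mul, h, aux_frob, h, one_pow]
    rw [add_assoc]
    simp [CharTwo.add_self_eq_zero]
  have key2 : ∀ x : K, x ^ (2 ^ n) = x + 1 → x ^ (2 ^ (3 * n)) = x + 1 := by
    intro x h
    have e : (2:ℕ) ^ (3 * n) = 2 ^ (2 * n) * 2 ^ n := by
      rw [← pow_add]; ring_nf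
    rw [e, pow_mul, key1 x h, h]
  -- g roots are f roots
  have hBA : g.rootSet K ⊆ f.rootSet K := by
    intro x hx
    rw [hmemg] at hx
    rw [hmemf]
    have hxg : x ^ (2 ^ n) = x + 1 := by linear_combination hx - (x + 1) * h0
    have := key2 x hxg
    linear_combination this + (x + 1) * h0
  -- the set equality
  have hset : {x : K | x ^ (2 ^ (3 * n)) + x + 1 = 0 ∧
        x ^ (2 ^ (6 * n)) = x ∧ x ^ (2 ^ (2 * n)) ≠ x ∧ x ^ (2 ^ (3 * n)) ≠ x}
      = f.rootSet K \ g.rootSet K := by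
    ext x
    simp only [Set.mem_setOf_eq, Set.mem_diff, hmemf, hmemg]
    constructor
    · rintro ⟨h1, -, h3, -⟩
      refine ⟨h1, fun hgx => h3 ?_⟩
      exact key1 x (by linear_combination hgx - (x + 1) * h0)
    · rintro ⟨h1, h2⟩
      have hx3 : x ^ (2 ^ (3 * n)) = x + 1 := by linear_combination h1 - (x + 1) * h0
      refine ⟨h1, ?_, ?_, ?_⟩
      · have e : (2:ℕ) ^ (6 * n) = 2 ^ (3 * n) * 2 ^ (3 * n) := by
          rw [← pow_add]; ring_nf
        rw [e, pow_mul, hx3, aux_frob, hx3, one_pow, add_assoc]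
        simp [CharTwo.add_self_eq_zero]
      · intro h22
        apply h2
        have e : (2:ℕ) ^ (3 * n) = 2 ^ (2 * n) * 2 ^ n := by
          rw [← pow_add]; ring_nf
        have hxn : x ^ (2 ^ n) = x + 1 := by
          rw [e, pow_mul, h22] at hx3; exact hx3
        linear_combination hxn + (x + 1) * h0
      · rw [hx3]
        intro h
        have : (1 : K) = 0 := by linear_combination h
        simp at this
    -- end
  have hrw : Nat.card {x : K // x ^ (2 ^ (3 * n)) + x + 1 = 0 ∧
        x ^ (2 ^ (6 * n)) = x ∧ x ^ (2 ^ (2 * n)) ≠ x ∧ x ^ (2 ^ (3 * n)) ≠ x}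
      = (f.rootSet K \ g.rootSet K).ncard := by
    rw [← Nat.card_coe_set_eq, ← hset]
    rfl
  rw [hrw, Set.ncard_diff hBA (Set.toFinite _), aux_card (3*n) (by omega), aux_card n hnpos]
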